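/- Let ι_curl : N(1 + curl curl) → D(curl) be the isometric inclusion of the boundary data space into D(curl) (graph inner products), and define curl• := ι_curl* ∘ curl ∘ ι_curl as an operator on N(1 + curl curl). Then curl• is skew-selfadjoint: for all φ, ψ ∈ N(1 + curl curl), ⟨curl• φ | ψ⟩ = -⟨φ | curl• ψ⟩, where the inner product is the graph inner product of curl. -/

import Mathlib

open LinearPMap

/-- On the boundary data space `N(1 + curl curl)` (elements `φ` of the domain
of the maximal `curl` with `curl φ` in the domain and `curl curl φ = -φ`), equipped with
the graph inner product of `curl`, the operator `curl• = ι_curl* ∘ curl ∘ ι_curl` (which on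
such elements is given by `φ ↦ curl φ`, since `curl φ ∈ N(1 + curl curl)` again) is
skew-selfadjoint: `⟨curl• φ | ψ⟩ = -⟨φ | curl• ψ⟩` in the graph inner product
`⟨a|b⟩ + ⟨curl a|curl b⟩`. -/
theorem stmt2 {H : Type*} [NormedAddCommGroup H] [InnerProductSpace ℂ H] [CompleteSpace H]
    (curl : H →ₗ.[ℂ] H)
    (φ ψ : curl.domain)
    (hφ : curl φ ∈ curl.domain) (hψ : curl ψ ∈ curl.domain)
    (hφN : curl ⟨curl φ, hφ⟩ = -(φ : H))    -- φ ∈ N(1 + curl curl)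
    (hψN : curl ⟨curl ψ, hψ⟩ = -(ψ : H))    -- ψ ∈ N(1 + curl curl)
    :
    (inner ℂ (curl φ) ((ψ : H)) : ℂ) + inner ℂ (curl ⟨curl φ, hφ⟩) (curl ψ)
      = -((inner ℂ ((φ : H)) (curl ψ) : ℂ) + inner ℂ (curl φ) (curl ⟨curl ψ, hψ⟩)) := by
  rw [hφN, hψN, inner_neg_left, inner_neg_right]; ring
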